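/- In Ω²(A) for the bidirected n-gon (the quotient of Ω¹⊗Ω¹ by ker(σ − id)), the relation ξ_{μ→μ+1} ∧ ξ_{μ+1→μ} = −ξ_{μ→μ−1} ∧ ξ_{μ−1→μ} holds for every μ ∈ ℤ/n, and {ξ_{μ→μ−1} ∧ ξ_{μ−1→μ} : μ ∈ ℤ/n} is a ℂ-linear basis of Ω²(A). -/

import Mathlib

/-- ℂ-basis-coefficient model of `Ω¹ ⊗_A Ω¹` for the bidirected `n`-gon:
index `(μ, d₁, d₂)` is the 2-path `ξ_{μ→μ+ε(d₁)} ⊗ ξ_{μ+ε(d₁)→μ+ε(d₁)+ε(d₂)}`. -/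
abbrev Poly2 (n : ℕ) := ZMod n × Bool × Bool → ℂ

/-- the basis 2-path `(μ, d₁, d₂)`. -/
noncomputable def e2 (n : ℕ) (μ : ZMod n) (d₁ d₂ : Bool) : Poly2 n :=
  Pi.single (μ, d₁, d₂) 1

/-- the bimodule map `σ`: swaps the directions of the two legs. -/
noncomputable def sig (n : ℕ) : Poly2 n →ₗ[ℂ] Poly2 n :=
  LinearMap.funLeft ℂ ℂ fun p => (p.1, p.2.2, p.2.1)

/-- `ker (σ - id)`, i.e. `ker A₂`. -/
noncomputable def ker2 (n : ℕ) : Submodule ℂ (Poly2 n) :=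
  LinearMap.ker (sig n - LinearMap.id)

/-- `Ω²(A) = (Ω¹ ⊗ Ω¹) / ker A₂`. -/
abbrev Om2 (n : ℕ) := Poly2 n ⧸ ker2 n

/-- the quotient (wedge) map `Ω¹ ⊗ Ω¹ → Ω²`. -/
noncomputable def mk2 (n : ℕ) : Poly2 n →ₗ[ℂ] Om2 n := (ker2 n).mkQ

lemma mem_ker2_iff {n : ℕ} (f : Poly2 n) :
    f ∈ ker2 n ↔ ∀ p : ZMod n × Bool × Bool, f (p.1, p.2.2, p.2.1) = f p := by
  simp only [ker2, LinearMap.mem_ker, sig, LinearMap.sub_apply, LinearMap.id_apply]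
  constructor
  · intro h p
    have := congrFun h p
    simpa [LinearMap.funLeft, sub_eq_zero] using this
  · intro h
    funext p
    simpa [LinearMap.funLeft, sub_eq_zero] using h p

noncomputable def phi (n : ℕ) : Poly2 n →ₗ[ℂ] (ZMod n → ℂ) where
  toFun f := fun μ => f (μ, false, true) - f (μ, true, false)
  map_add' f g := by funext μ; simp [Pi.add_apply]; ring
  map_smul' c f := by funext μ; simp [Pi.smul_apply]; ring

lemma ker2_eq (n : ℕ) : ker2 n = LinearMap.ker (phi n) := by
  ext f
  rw [mem_ker2_iff, LinearMap.mem_ker]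
  constructor
  · intro h
    funext μ
    have := h (μ, true, false)
    simp only [phi, LinearMap.coe_mk, AddHom.coe_mk, Pi.zero_apply]
    simp at this
    rw [this]; ring
  · intro h p
    obtain ⟨μ, d₁, d₂⟩ := p
    have h1 : f (μ, false, true) = f (μ, true, false) := by
      have := congrFun h μ
      simp only [phi, LinearMap.coe_mk, AddHom.coe_mk, Pi.zero_apply, sub_eq_zero] at this
      exact this
    cases d₁ <;> cases d₂ <;> simp [h1]

/-- in `Ω²(A)`, `ξ_{μ→μ+1} ∧ ξ_{μ+1→μ} = − ξ_{μ→μ−1} ∧ ξ_{μ−1→μ}`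
for all `μ`, and `{ξ_{μ→μ−1} ∧ ξ_{μ−1→μ}}_{μ ∈ ℤ/n}` is a ℂ-linear basis of `Ω²(A)`. -/
theorem stmt9 (n : ℕ) [NeZero n] (hn : 3 ≤ n) :
    (∀ μ : ZMod n, mk2 n (e2 n μ true false) = - mk2 n (e2 n μ false true))
  ∧ LinearIndependent ℂ (fun μ : ZMod n => mk2 n (e2 n μ false true))
  ∧ Submodule.span ℂ (Set.range fun μ : ZMod n => mk2 n (e2 n μ false true)) = ⊤ := by
  have hrel : ∀ μ : ZMod n, mk2 n (e2 n μ true false) = - mk2 n (e2 n μ false true) := by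
    intro μ
    rw [eq_neg_iff_add_eq_zero, ← map_add]
    rw [show (0 : Om2 n) = mk2 n 0 from (map_zero _).symm]
    rw [mk2, Submodule.mkQ_apply, Submodule.mkQ_apply, Submodule.Quotient.eq]
    rw [sub_zero, mem_ker2_iff]
    rintro ⟨ν, d₁, d₂⟩
    simp only [e2, Pi.add_apply]
    cases d₁ <;> cases d₂ <;> simp [Pi.single_apply, Prod.ext_iff] <;> ring
  refine ⟨hrel, ?_, ?_⟩
  · -- linear independence via lift of phi
    have hle : ker2 n ≤ LinearMap.ker (phi n) := (ker2_eq n).le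
    set ψ := (ker2 n).liftQ (phi n) hle with hψ
    have hcomp : ∀ μ : ZMod n, ψ (mk2 n (e2 n μ false true)) = Pi.single μ 1 := by
      intro μ
      rw [mk2, Submodule.mkQ_apply, hψ, Submodule.liftQ_apply]
      funext ν
      simp only [phi, LinearMap.coe_mk, AddHom.coe_mk, e2]
      by_cases h : ν = μ <;> simp [Pi.single_apply, Prod.ext_iff, h]
    have hind : LinearIndependent ℂ (fun μ : ZMod n => (Pi.single μ 1 : ZMod n → ℂ)) := by
      have := (Pi.basisFun ℂ (ZMod n)).linearIndependent
      convert this using 1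
      funext μ
      simp [Pi.basisFun_apply]
    apply LinearIndependent.of_comp ψ
    convert hind using 1
    funext μ
    exact hcomp μ
    all_goals rfl
  · -- span
    rw [eq_top_iff]
    have h1 : ∀ p : ZMod n × Bool × Bool,
        mk2 n (Pi.single p 1) ∈ Submodule.span ℂ
          (Set.range fun μ : ZMod n => mk2 n (e2 n μ false true)) := by
      rintro ⟨μ, d₁, d₂⟩
      have hmem : mk2 n (e2 n μ false true) ∈ Submodule.span ℂ
          (Set.range fun μ : ZMod n => mk2 n (e2 n μ false true)) :=
        Submodule.subset_span ⟨μ, rfl⟩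
      cases d₁ <;> cases d₂
      · -- false false : in ker2
        have : mk2 n (Pi.single (μ, false, false) 1) = 0 := by
          rw [mk2, Submodule.mkQ_apply, Submodule.Quotient.mk_eq_zero, mem_ker2_iff]
          rintro ⟨ν, a, b⟩
          cases a <;> cases b <;> simp [Pi.single_apply, Prod.ext_iff]
        rw [this]; exact Submodule.zero_mem _
      · exact hmem
      · rw [show (Pi.single (μ, true, false) 1 : Poly2 n) = e2 n μ true false from rfl,
            hrel μ]
        exact Submodule.neg_mem _ hmem
      · have : mk2 n (Pi.single (μ, true, true) 1) = 0 := by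
          rw [mk2, Submodule.mkQ_apply, Submodule.Quotient.mk_eq_zero, mem_ker2_iff]
          rintro ⟨ν, a, b⟩
          cases a <;> cases b <;> simp [Pi.single_apply, Prod.ext_iff]
        rw [this]; exact Submodule.zero_mem _
    intro x _
    obtain ⟨f, rfl⟩ := Submodule.mkQ_surjective (ker2 n) x
    have hf : f = ∑ p : ZMod n × Bool × Bool, f p • (Pi.single p 1 : Poly2 n) := by
      funext q
      simp [Pi.single_apply, Finset.sum_apply]
    show (ker2 n).mkQ f ∈ _
    have heq : (ker2 n).mkQ f = mk2 n f := rfl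
    rw [heq, hf, map_sum]
    exact Submodule.sum_mem _ fun p _ => by
      rw [map_smul]; exact Submodule.smul_mem _ _ (h1 p)
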